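/- Effect-domination ambiguity is unavoidable for linear models (Theorem 8.1). Let G be a DAG on [d], K ≥ 1, n ≥ d. Suppose given a ground-truth linear model: H ∈ ℝ^{d×n} with full row rank; for each k ∈ [K], A_k ∈ ℝ^{d×d} with (A_k)_{ij} ≠ 0 ⟺ j ∈ pa_G(i), Ω_k diagonal with positive entries; and the family {B_k = Ω_k^{−1/2}(I − A_k)}_{k∈[K]} node-level non-degenerate with respect to G. Then there exist Ĥ ∈ ℝ^{d×n} with full row rank and, for each k, a matrix Â_k with (Â_k)_{ij} ≠ 0 ⟺ j ∈ pa_G(i) and a diagonal matrix Ω̂_k with positive entries, such that: (a) {B̂_k = Ω̂_k^{−1/2}(I − Â_k)}_{k∈[K]} is node-level non-degenerate with respect to G; (b) B̂_k Ĥ = B_k H for all k ∈ [K] (the hypothetical model generates exactly the same observations from the same noise in every environment); and (c) the invertible matrix M := B̂_1^{−1} B_1 (which equals B̂_k^{−1} B_k for every k, and satisfies Ĥ = M H, i.e. the recovered latent variables are v = M z) has M_{ij} ≠ 0 for EVERY j ∈ \bar{dom}_G(i). Moreover, if additionally there is a partition [K] = ⋃_{i=1}^d 𝔈_i such that each group 𝔈_i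 consists of single-node interventions on node i (for any two distinct k, ℓ ∈ 𝔈_i and any j ∈ [d], the j-th rows of B_k and B_ℓ are equal if and only if j ≠ i), then Ĥ, Â_k, Ω̂_k can be chosen so that additionally, for the same partition, any two distinct k, ℓ ∈ 𝔈_i have the j-th rows of B̂_k and B̂_ℓ equal if and only if j ≠ i. -/

import Mathlib

open Matrix MeasureTheory

/-- `E i j` means there is a directed edge `i → j`. A DAG has no directed cycles. -/
def IsDAG {d : ℕ} (E : Fin d → Fin d → Prop) : Prop :=
  ∀ i, ¬ Relation.TransGen E i i

/-- The set of parents of `i`. -/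
def pa {d : ℕ} (E : Fin d → Fin d → Prop) (i : Fin d) : Set (Fin d) := {j | E j i}

/-- The set of children of `i`. -/
def ch {d : ℕ} (E : Fin d → Fin d → Prop) (i : Fin d) : Set (Fin d) := {j | E i j}

/-- `pa_G(i) ∪ {i}`. -/
def barPa {d : ℕ} (E : Fin d → Fin d → Prop) (i : Fin d) : Set (Fin d) := insert i (pa E i)

/-- `ch_G(i) ∪ {i}`. -/
def barCh {d : ℕ} (E : Fin d → Fin d → Prop) (i : Fin d) : Set (Fin d) := insert i (ch E i)

/-- The effect-domination set `dom_G(i) = {j ∈ pa_G(i) : ch_G(i) ⊆ ch_G(j)}`. -/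
def domSet {d : ℕ} (E : Fin d → Fin d → Prop) (i : Fin d) : Set (Fin d) :=
  {j | j ∈ pa E i ∧ ch E i ⊆ ch E j}

/-- `dom_G(i) ∪ {i}`. -/
def barDom {d : ℕ} (E : Fin d → Fin d → Prop) (i : Fin d) : Set (Fin d) :=
  insert i (domSet E i)

/-- Ancestors of `i`: nodes with a directed path to `i`. -/
def ans {d : ℕ} (E : Fin d → Fin d → Prop) (i : Fin d) : Set (Fin d) :=
  {j | Relation.TransGen E j i}

/-- A set is ancestral if it is closed under taking ancestors. -/
def Ancestral {d : ℕ} (E : Fin d → Fin d → Prop) (S : Set (Fin d)) : Prop :=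
  ∀ j ∈ S, ans E j ⊆ S

/-- The support of `B` matches the graph: `B i j ≠ 0 ↔ j ∈ \bar{pa}_G(i)`. -/
def SupportMatches {d : ℕ} (E : Fin d → Fin d → Prop) (B : Matrix (Fin d) (Fin d) ℝ) : Prop :=
  ∀ i j, B i j ≠ 0 ↔ j ∈ barPa E i

/-- Node-level non-degeneracy: for every node `i`, the span of the `i`-th rows
`(B_k)_i` has dimension `|pa_G(i)| + 1`. -/
def NodeNonDegenerate {d K : ℕ} (E : Fin d → Fin d → Prop)
    (B : Fin K → Matrix (Fin d) (Fin d) ℝ) : Prop :=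
  ∀ i, Module.finrank ℝ (Submodule.span ℝ (Set.range fun k => B k i)) = (pa E i).ncard + 1

/-- The properties required of a hypothetical alternative solution `(Ĥ, Â_k, Ω̂_k)`
exhibiting the effect-domination ambiguity for the ground-truth model `(H, B_k)`
with graph `G`. -/
def AmbiguousSolution {d n K : ℕ} (E : Fin d → Fin d → Prop)
    (H : Matrix (Fin d) (Fin n) ℝ) (B : Fin K → Matrix (Fin d) (Fin d) ℝ)
    (Hhat : Matrix (Fin d) (Fin n) ℝ) (Ahat : Fin K → Matrix (Fin d) (Fin d) ℝ)
    (ωhat : Fin K → Fin d → ℝ) (Bhat : Fin K → Matrix (Fin d) (Fin d) ℝ)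
    (M : Matrix (Fin d) (Fin d) ℝ) : Prop :=
  -- (i') full row rank
  Hhat.rank = d ∧
  -- (ii') support of `Â_k` matches `G`, `Ω̂_k` diagonal positive
  (∀ k i j, Ahat k i j ≠ 0 ↔ j ∈ pa E i) ∧
  (∀ k i, 0 < ωhat k i) ∧
  (∀ k, Bhat k = Matrix.diagonal (fun i => (Real.sqrt (ωhat k i))⁻¹) * (1 - Ahat k)) ∧
  -- (a) node-level non-degeneracy
  NodeNonDegenerate E Bhat ∧
  -- (b) identical observations from the same noise in every environment
  (∀ k, Bhat k * Hhat = B k * H) ∧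
  -- (c) the mixing matrix `M = B̂_k⁻¹ B_k` is invertible, satisfies `Ĥ = M H`,
  -- and has `M i j ≠ 0` for every `j ∈ \bar{dom}_G(i)`
  IsUnit M ∧
  (∀ k, (Bhat k)⁻¹ * B k = M) ∧
  Hhat = M * H ∧
  (∀ i j, j ∈ barDom E i → M i j ≠ 0)

section Aux

variable {d : ℕ} {E : Fin d → Fin d → Prop}

lemma IsDAG.irrefl (hG : IsDAG E) (i : Fin d) : ¬ E i i :=
  fun h => hG i (Relation.TransGen.single h)

lemma ans_lt (hG : IsDAG E) {j i : Fin d} (h : E j i) :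
    (ans E j).ncard < (ans E i).ncard := by
  apply Set.ncard_lt_ncard _ (Set.toFinite _)
  constructor
  · intro t ht; exact Relation.TransGen.tail ht h
  · intro hsub
    exact hG j (hsub (Relation.TransGen.single h))

lemma ans_lt_d (hG : IsDAG E) (i : Fin d) : (ans E i).ncard < d := by
  have hss : ans E i ⊂ Set.univ := by
    rw [Set.ssubset_univ_iff]
    intro h
    exact hG i (h ▸ Set.mem_univ i : i ∈ ans E i)
  have := Set.ncard_lt_ncard hss Set.finite_univ
  simpa [Set.ncard_univ] using this

lemma pow_entry_le (hG : IsDAG E) (C : Matrix (Fin d) (Fin d) ℝ)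
    (hC : ∀ i j, C i j ≠ 0 → E j i) :
    ∀ m i j, (C ^ m) i j ≠ 0 → m + (ans E j).ncard ≤ (ans E i).ncard := by
  intro m
  induction m with
  | zero =>
    intro i j h
    rw [pow_zero] at h
    have : i = j := by
      by_contra hne
      exact h (Matrix.one_apply_ne hne)
    subst this; simp
  | succ m ih =>
    intro i j h
    rw [pow_succ', Matrix.mul_apply] at h
    obtain ⟨t, -, ht⟩ := Finset.exists_ne_zero_of_sum_ne_zero h
    have h1 : C i t ≠ 0 := fun h0 => ht (by simp [h0])
    have h2 : (C ^ m) t j ≠ 0 := fun h0 => ht (by simp [h0])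
    have := ans_lt hG (hC i t h1)
    have := ih t j h2
    omega

lemma pow_d_eq_zero (hG : IsDAG E) (C : Matrix (Fin d) (Fin d) ℝ)
    (hC : ∀ i j, C i j ≠ 0 → E j i) : C ^ d = 0 := by
  ext i j
  by_contra h
  have h1 := pow_entry_le hG C hC d i j h
  have h2 := ans_lt_d hG i
  omega

lemma geom_inv {C : Matrix (Fin d) (Fin d) ℝ} (hCd : C ^ d = 0) :
    (1 - C) * (∑ m ∈ Finset.range d, C ^ m) = 1 ∧
      (∑ m ∈ Finset.range d, C ^ m) * (1 - C) = 1 := by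
  have h1 := geom_sum_mul C d
  have h2 := mul_geom_sum C d
  rw [hCd, zero_sub] at h1 h2
  constructor
  · have : (1 - C) * ∑ m ∈ Finset.range d, C ^ m
        = -((C - 1) * ∑ m ∈ Finset.range d, C ^ m) := by
      rw [← neg_mul, neg_sub]
    rw [this, h2, neg_neg]
  · have : (∑ m ∈ Finset.range d, C ^ m) * (1 - C)
        = -((∑ m ∈ Finset.range d, C ^ m) * (C - 1)) := by
      rw [← mul_neg, neg_sub]
    rw [this, h1, neg_neg]

open scoped Classical in
noncomputable def Pm {d : ℕ} (E : Fin d → Fin d → Prop) : Matrix (Fin d) (Fin d) ℝ :=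
  Matrix.of fun i j => if j ∈ domSet E i then 1 else 0

lemma Pm_ne_zero {i j : Fin d} (h : (Pm E) i j ≠ 0) : j ∈ domSet E i := by
  by_contra hj
  exact h (by classical simp [Pm, hj])

lemma Pm_of_mem {i j : Fin d} (h : j ∈ domSet E i) : (Pm E) i j = 1 := by
  classical simp [Pm, h]

lemma dom_closure {i₀ i j : Fin d} (hi : i ∈ barPa E i₀) (hj : j ∈ domSet E i) :
    j ∈ pa E i₀ := by
  rcases hi with rfl | hi
  · exact hj.1
  · exact hj.2 hi

lemma Pm_pow_barPa : ∀ m : ℕ, ∀ i j : Fin d, ((Pm E) ^ m) i j ≠ 0 →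
    ∀ i₀, i ∈ barPa E i₀ → j ∈ barPa E i₀ := by
  intro m
  induction m with
  | zero =>
    intro i j h i₀ hi
    rw [pow_zero] at h
    have : i = j := by
      by_contra hne; exact h (Matrix.one_apply_ne hne)
    exact this ▸ hi
  | succ m ih =>
    intro i j h i₀ hi
    rw [pow_succ', Matrix.mul_apply] at h
    obtain ⟨t, -, ht⟩ := Finset.exists_ne_zero_of_sum_ne_zero h
    have h1 : (Pm E) i t ≠ 0 := fun h0 => ht (by simp [h0])
    have h2 : ((Pm E) ^ m) t j ≠ 0 := fun h0 => ht (by simp [h0])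
    have htmem : t ∈ pa E i₀ := dom_closure hi (Pm_ne_zero h1)
    exact ih t j h2 i₀ (Set.mem_insert_iff.mpr (Or.inr htmem))

lemma Pm_pow_trans : ∀ m : ℕ, ∀ i j : Fin d, ((Pm E) ^ (m + 1)) i j ≠ 0 →
    Relation.TransGen E j i := by
  intro m
  induction m with
  | zero =>
    intro i j h
    rw [pow_one] at h
    exact Relation.TransGen.single (Pm_ne_zero h).1
  | succ m ih =>
    intro i j h
    rw [pow_succ', Matrix.mul_apply] at h
    obtain ⟨t, -, ht⟩ := Finset.exists_ne_zero_of_sum_ne_zero h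
    have h1 : (Pm E) i t ≠ 0 := fun h0 => ht (by simp [h0])
    have h2 : ((Pm E) ^ (m + 1)) t j ≠ 0 := fun h0 => ht (by simp [h0])
    exact Relation.TransGen.tail (ih t j h2) (Pm_ne_zero h1).1

lemma row_mul (X Y : Matrix (Fin d) (Fin d) ℝ) (i : Fin d) :
    (X * Y) i = (X i) ᵥ* Y := by
  funext j
  simp [Matrix.mul_apply, Matrix.vecMul, dotProduct]

end Aux

section Main

variable {d n K : ℕ}

theorem construction
    (E : Fin d → Fin d → Prop) (hG : IsDAG E)
    (H : Matrix (Fin d) (Fin n) ℝ) (hH : H.rank = d)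
    (A : Fin K → Matrix (Fin d) (Fin d) ℝ)
    (hA : ∀ k i j, A k i j ≠ 0 ↔ j ∈ pa E i)
    (ω : Fin K → Fin d → ℝ) (hω : ∀ k i, 0 < ω k i)
    (B : Fin K → Matrix (Fin d) (Fin d) ℝ)
    (hB : ∀ k, B k = Matrix.diagonal (fun i => (Real.sqrt (ω k i))⁻¹) * (1 - A k))
    (hnd : NodeNonDegenerate E B) :
    ∃ (M Q : Matrix (Fin d) (Fin d) ℝ) (Bhat Ahat : Fin K → Matrix (Fin d) (Fin d) ℝ),
      M * Q = 1 ∧ Q * M = 1 ∧ (∀ k, Bhat k = B k * Q) ∧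
      ((M * H).rank = d ∧
      (∀ k i j, Ahat k i j ≠ 0 ↔ j ∈ pa E i) ∧
      (∀ k i, 0 < ω k i) ∧
      (∀ k, Bhat k = Matrix.diagonal (fun i => (Real.sqrt (ω k i))⁻¹) * (1 - Ahat k)) ∧
      NodeNonDegenerate E Bhat ∧
      (∀ k, Bhat k * (M * H) = B k * H) ∧
      IsUnit M ∧
      (∀ k, (Bhat k)⁻¹ * B k = M) ∧
      (M * H) = M * H ∧
      (∀ i j, j ∈ barDom E i → M i j ≠ 0)) := by
  have hirr : ∀ i, ¬ E i i := fun i => IsDAG.irrefl hG i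
  have hsq : ∀ k i, Real.sqrt (ω k i) ≠ 0 := fun k i =>
    ne_of_gt (Real.sqrt_pos.mpr (hω k i))
  have hw : ∀ k i, (Real.sqrt (ω k i))⁻¹ ≠ 0 := fun k i => inv_ne_zero (hsq k i)
  have hBapp : ∀ k i j, B k i j
      = (Real.sqrt (ω k i))⁻¹ * ((1 : Matrix (Fin d) (Fin d) ℝ) i j - A k i j) := by
    intro k i j
    rw [hB k, Matrix.diagonal_mul, Matrix.sub_apply]
  have hAdiag : ∀ k i, A k i i = 0 := by
    intro k i
    by_contra h
    exact hirr i ((hA k i i).1 h)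
  have hBdiag : ∀ k i, B k i i = (Real.sqrt (ω k i))⁻¹ := by
    intro k i
    rw [hBapp, hAdiag, Matrix.one_apply_eq]
    ring
  have hBsupp : ∀ k i j, B k i j ≠ 0 ↔ j ∈ barPa E i := by
    intro k i j
    by_cases hij : j = i
    · subst hij
      rw [hBdiag]
      simp [barPa, hw k j]
    · rw [hBapp, Matrix.one_apply_ne (Ne.symm hij), zero_sub, mul_neg, neg_ne_zero,
        mul_ne_zero_iff]
      constructor
      · intro h
        exact Set.mem_insert_iff.mpr (Or.inr ((hA k i j).1 h.2))
      · intro h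
        rcases Set.mem_insert_iff.mp h with h' | h'
        · exact absurd h' hij
        · exact ⟨hw k i, (hA k i j).2 h'⟩
  set P : Matrix (Fin d) (Fin d) ℝ := Pm E with hP
  have hPE : ∀ i j, P i j ≠ 0 → E j i := fun i j h => (Pm_ne_zero h).1
  -- choice of ε
  have hev : ∀ᶠ ε in nhds (0 : ℝ), ∀ k i j, j ∈ pa E i →
      (B k * (∑ m ∈ Finset.range d, ((-ε) ^ m) • P ^ m)) i j ≠ 0 := by
    rw [Filter.eventually_all]; intro k
    rw [Filter.eventually_all]; intro i
    rw [Filter.eventually_all]; intro j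
    by_cases hj : j ∈ pa E i
    · have hd : 0 < d := i.pos
      have hently : ∀ ε : ℝ, (B k * (∑ m ∈ Finset.range d, ((-ε) ^ m) • P ^ m)) i j
          = ∑ m ∈ Finset.range d, (-ε) ^ m * (B k * P ^ m) i j := by
        intro ε
        rw [Finset.mul_sum]
        simp [Matrix.sum_apply, Matrix.mul_smul]
      have heq : (fun ε : ℝ => (B k * (∑ m ∈ Finset.range d, ((-ε) ^ m) • P ^ m)) i j)
          = fun ε : ℝ => ∑ m ∈ Finset.range d, (-ε) ^ m * (B k * P ^ m) i j :=
        funext hently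
      have hc : Continuous fun ε : ℝ =>
          (B k * (∑ m ∈ Finset.range d, ((-ε) ^ m) • P ^ m)) i j := by
        rw [heq]
        exact continuous_finset_sum _ fun m _ =>
          ((continuous_id.neg.pow m).mul continuous_const)
      have h0 : (B k * (∑ m ∈ Finset.range d, ((-(0:ℝ)) ^ m) • P ^ m)) i j ≠ 0 := by
        rw [hently 0, Finset.sum_eq_single 0]
        · simpa using (hBsupp k i j).2 (Set.mem_insert_iff.mpr (Or.inr hj))
        · intro m hm hm0
          rw [neg_zero, zero_pow hm0, zero_mul]
        · intro h; exact absurd (Finset.mem_range.mpr hd) h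
      have := hc.continuousAt.eventually_ne h0
      exact this.mono fun ε hε _ => hε
    · exact Filter.Eventually.of_forall fun ε h => absurd h hj
  rw [Metric.eventually_nhds_iff] at hev
  obtain ⟨δ, hδ, hball⟩ := hev
  set ε : ℝ := δ / 2 with hεdef
  have hε : 0 < ε := by positivity
  have hmain := hball (show dist ε 0 < δ by
    rw [Real.dist_eq, sub_zero, abs_of_pos hε]; linarith)
  -- the matrices
  set N : Matrix (Fin d) (Fin d) ℝ := (-ε) • P with hNdef
  set Q : Matrix (Fin d) (Fin d) ℝ := ∑ m ∈ Finset.range d, N ^ m with hQdef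
  have hQ' : Q = ∑ m ∈ Finset.range d, ((-ε) ^ m) • P ^ m := by
    rw [hQdef]
    exact Finset.sum_congr rfl fun m _ => smul_pow (-ε) P m
  have hNE : ∀ i j, N i j ≠ 0 → E j i := by
    intro i j h
    apply hPE i j
    intro h0
    apply h
    rw [hNdef, Matrix.smul_apply, h0, smul_zero]
  have hNd := pow_d_eq_zero hG N hNE
  obtain ⟨hMQ, hQM⟩ := geom_inv hNd
  set M : Matrix (Fin d) (Fin d) ℝ := 1 - N with hMdef
  have hQentry : ∀ l j, Q l j = ∑ m ∈ Finset.range d, (-ε) ^ m * (P ^ m) l j := by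
    intro l j
    rw [hQ']
    simp [Matrix.sum_apply]
  have hQof : ∀ l j, Q l j ≠ 0 → ∀ i₀, l ∈ barPa E i₀ → j ∈ barPa E i₀ := by
    intro l j h i₀ hl
    rw [hQentry] at h
    obtain ⟨m, -, hm⟩ := Finset.exists_ne_zero_of_sum_ne_zero h
    have hPm : (P ^ m) l j ≠ 0 := fun h0 => hm (by rw [h0, mul_zero])
    exact Pm_pow_barPa m l j hPm i₀ hl
  have hQcol : ∀ i l, l ∈ pa E i → Q l i = 0 := by
    intro i l hl
    rw [hQentry]
    apply Finset.sum_eq_zero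
    rintro m -
    cases m with
    | zero =>
      have hli : l ≠ i := fun h => hirr i (h ▸ hl)
      rw [pow_zero, pow_zero, Matrix.one_apply_ne hli, mul_zero]
    | succ m' =>
      have : (P ^ (m' + 1)) l i = 0 := by
        by_contra h
        exact hG i (Relation.TransGen.tail (Pm_pow_trans m' l i h) hl)
      rw [this, mul_zero]
  have hQdiag : ∀ i, Q i i = 1 := by
    intro i
    rw [hQentry, Finset.sum_eq_single 0]
    · simp
    · intro m hm hm0
      obtain ⟨m', rfl⟩ : ∃ m', m = m' + 1 := ⟨m - 1, by omega⟩
      have : (P ^ (m' + 1)) i i = 0 := by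
        by_contra h
        exact hG i (Pm_pow_trans m' i i h)
      rw [this, mul_zero]
    · intro h; exact absurd (Finset.mem_range.mpr i.pos) h
  set Bhat : Fin K → Matrix (Fin d) (Fin d) ℝ := fun k => B k * Q with hBhatdef
  have hBhat_pa : ∀ k i j, j ∈ pa E i → Bhat k i j ≠ 0 := by
    intro k i j hj
    have := hmain k i j hj
    rw [hBhatdef, hQ']
    exact this
  have hBhat_zero : ∀ k i j, j ∉ barPa E i → Bhat k i j = 0 := by
    intro k i j hj
    show (B k * Q) i j = 0
    rw [Matrix.mul_apply]
    apply Finset.sum_eq_zero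
    rintro l -
    by_cases hBl : B k i l = 0
    · rw [hBl, zero_mul]
    · have hl : l ∈ barPa E i := (hBsupp k i l).1 hBl
      have : Q l j = 0 := by
        by_contra h
        exact hj (hQof l j h i hl)
      rw [this, mul_zero]
  have hBhat_diag : ∀ k i, Bhat k i i = (Real.sqrt (ω k i))⁻¹ := by
    intro k i
    show (B k * Q) i i = _
    rw [Matrix.mul_apply, Finset.sum_eq_single i]
    · rw [hQdiag, hBdiag, mul_one]
    · rintro l - hl
      by_cases hBl : B k i l = 0
      · rw [hBl, zero_mul]
      · have hlmem : l ∈ barPa E i := (hBsupp k i l).1 hBl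
        rcases Set.mem_insert_iff.mp hlmem with h' | h'
        · exact absurd h' hl
        · rw [hQcol i l h', mul_zero]
    · intro h; exact absurd (Finset.mem_univ i) h
  have hBhatsupp : ∀ k i j, Bhat k i j ≠ 0 ↔ j ∈ barPa E i := by
    intro k i j
    constructor
    · intro h
      by_contra hj
      exact h (hBhat_zero k i j hj)
    · intro hj
      rcases Set.mem_insert_iff.mp hj with rfl | hj'
      · rw [hBhat_diag]; exact hw k j
      · exact hBhat_pa k i j hj'
  set Ahat : Fin K → Matrix (Fin d) (Fin d) ℝ :=
    fun k => 1 - Matrix.diagonal (fun i => Real.sqrt (ω k i)) * Bhat k with hAhatdef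
  have hAhat_entry : ∀ k i j, Ahat k i j
      = (1 : Matrix (Fin d) (Fin d) ℝ) i j - Real.sqrt (ω k i) * Bhat k i j := by
    intro k i j
    show ((1 : Matrix (Fin d) (Fin d) ℝ)
        - Matrix.diagonal (fun i => Real.sqrt (ω k i)) * Bhat k) i j = _
    rw [Matrix.sub_apply, Matrix.diagonal_mul]
  have hBhat_eq : ∀ k, Bhat k
      = Matrix.diagonal (fun i => (Real.sqrt (ω k i))⁻¹) * (1 - Ahat k) := by
    intro k
    have h1 : (1 : Matrix (Fin d) (Fin d) ℝ) - Ahat k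
        = Matrix.diagonal (fun i => Real.sqrt (ω k i)) * Bhat k := by
      rw [hAhatdef, sub_sub_cancel]
    rw [h1, ← Matrix.mul_assoc, Matrix.diagonal_mul_diagonal]
    have : (fun i => (Real.sqrt (ω k i))⁻¹ * Real.sqrt (ω k i)) = fun _ : Fin d => (1:ℝ) :=
      funext fun i => inv_mul_cancel₀ (hsq k i)
    rw [this, Matrix.diagonal_one, Matrix.one_mul]
  have hAhat_supp : ∀ k i j, Ahat k i j ≠ 0 ↔ j ∈ pa E i := by
    intro k i j
    rw [hAhat_entry]
    by_cases hij : i = j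
    · subst hij
      rw [Matrix.one_apply_eq, hBhat_diag, mul_inv_cancel₀ (hsq k i), sub_self]
      exact iff_of_false (fun h => h rfl) (hirr i)
    · rw [Matrix.one_apply_ne hij, zero_sub, neg_ne_zero, mul_ne_zero_iff]
      constructor
      · intro h
        rcases Set.mem_insert_iff.mp ((hBhatsupp k i j).1 h.2) with h' | h'
        · exact absurd h'.symm hij
        · exact h'
      · intro h
        exact ⟨hsq k i, (hBhatsupp k i j).2 (Set.mem_insert_iff.mpr (Or.inr h))⟩
  -- inverses of B k
  have hAE : ∀ k, ∀ i j, A k i j ≠ 0 → E j i := fun k i j h => (hA k i j).1 h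
  have hAd : ∀ k, (A k) ^ d = 0 := fun k => pow_d_eq_zero hG _ (hAE k)
  set R : Fin K → Matrix (Fin d) (Fin d) ℝ :=
    fun k => (∑ m ∈ Finset.range d, (A k) ^ m) * Matrix.diagonal (fun i => Real.sqrt (ω k i))
    with hRdef
  have hDD : ∀ k, Matrix.diagonal (fun i => Real.sqrt (ω k i))
      * Matrix.diagonal (fun i => (Real.sqrt (ω k i))⁻¹) = 1 := by
    intro k
    rw [Matrix.diagonal_mul_diagonal]
    have : (fun i => Real.sqrt (ω k i) * (Real.sqrt (ω k i))⁻¹) = fun _ : Fin d => (1:ℝ) :=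
      funext fun i => mul_inv_cancel₀ (hsq k i)
    rw [this, Matrix.diagonal_one]
  have hDD' : ∀ k, Matrix.diagonal (fun i => (Real.sqrt (ω k i))⁻¹)
      * Matrix.diagonal (fun i => Real.sqrt (ω k i)) = 1 := by
    intro k
    rw [Matrix.diagonal_mul_diagonal]
    have : (fun i => (Real.sqrt (ω k i))⁻¹ * Real.sqrt (ω k i)) = fun _ : Fin d => (1:ℝ) :=
      funext fun i => inv_mul_cancel₀ (hsq k i)
    rw [this, Matrix.diagonal_one]
  have hgeomA : ∀ k, ((1 - A k) * (∑ m ∈ Finset.range d, (A k) ^ m) = 1 ∧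
      (∑ m ∈ Finset.range d, (A k) ^ m) * (1 - A k) = 1) := fun k => geom_inv (hAd k)
  have hRB : ∀ k, R k * B k = 1 := by
    intro k
    rw [hRdef, hB k, Matrix.mul_assoc, ← Matrix.mul_assoc (Matrix.diagonal _), hDD k,
      Matrix.one_mul, (hgeomA k).2]
  have hBR : ∀ k, B k * R k = 1 := by
    intro k
    rw [hRdef, hB k, Matrix.mul_assoc, ← Matrix.mul_assoc (1 - A k), (hgeomA k).1,
      Matrix.one_mul, hDD' k]
  have hMunit : IsUnit M := ⟨⟨M, Q, hMQ, hQM⟩, rfl⟩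
  have hBhat_inv : ∀ k, (Bhat k)⁻¹ = M * R k := by
    intro k
    apply Matrix.inv_eq_left_inv
    show (M * R k) * (B k * Q) = 1
    rw [Matrix.mul_assoc M (R k) (B k * Q), ← Matrix.mul_assoc (R k) (B k) Q, hRB k,
      Matrix.one_mul, hMQ]
  have hBinvB : ∀ k, (Bhat k)⁻¹ * B k = M := by
    intro k
    rw [hBhat_inv k, Matrix.mul_assoc, hRB k, Matrix.mul_one]
  have hBhatH : ∀ k, Bhat k * (M * H) = B k * H := by
    intro k
    show (B k * Q) * (M * H) = B k * H
    rw [Matrix.mul_assoc (B k) Q (M * H), ← Matrix.mul_assoc Q M H, hQM, Matrix.one_mul]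
  have hrank : (M * H).rank = d := by
    rw [Matrix.rank_mul_eq_right_of_isUnit_det M H ((Matrix.isUnit_iff_isUnit_det M).mp hMunit),
      hH]
  have hMentry : ∀ i j, M i j = (1 : Matrix (Fin d) (Fin d) ℝ) i j + ε * P i j := by
    intro i j
    rw [hMdef, Matrix.sub_apply, hNdef, Matrix.smul_apply, smul_eq_mul]
    ring
  have hMdom : ∀ i j, j ∈ barDom E i → M i j ≠ 0 := by
    intro i j hj
    rw [hMentry]
    rcases Set.mem_insert_iff.mp hj with rfl | hj'
    · have hPjj : P j j = 0 := by
        by_contra h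
        exact hirr j (Pm_ne_zero h).1
      rw [Matrix.one_apply_eq, hPjj, mul_zero, add_zero]
      exact one_ne_zero
    · have hji : j ≠ i := fun h => hirr i (h ▸ hj'.1)
      rw [Matrix.one_apply_ne (Ne.symm hji), hP, Pm_of_mem hj', zero_add, mul_one]
      exact ne_of_gt hε
  -- non-degeneracy
  let e : (Fin d → ℝ) ≃ₗ[ℝ] (Fin d → ℝ) :=
    LinearEquiv.ofLinear (Matrix.vecMulLinear Q) (Matrix.vecMulLinear M)
      (by
        apply LinearMap.ext
        intro v
        simp [Matrix.vecMul_vecMul, hMQ, Matrix.vecMul_one]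
        rw [show M * Q = 1 from hMQ, Matrix.vecMul_one])
      (by
        apply LinearMap.ext
        intro v
        simp [Matrix.vecMul_vecMul, hQM, Matrix.vecMul_one]
        rw [show Q * M = 1 from hQM, Matrix.vecMul_one])
  have hndhat : NodeNonDegenerate E Bhat := by
    intro i
    have hrow : (fun k => Bhat k i) = (fun v => e v) ∘ (fun k => B k i) := by
      funext k
      show (B k * Q) i = e (B k i)
      rw [row_mul]
      rfl
    rw [hrow, Set.range_comp]
    have himg : (fun v => e v) '' (Set.range fun k => B k i)
        = (e.toLinearMap) '' (Set.range fun k => B k i) := rfl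
    rw [himg, ← Submodule.map_span]
    rw [LinearEquiv.finrank_map_eq e]
    exact hnd i
  exact ⟨M, Q, Bhat, Ahat, hMQ, hQM, fun k => rfl,
    hrank, hAhat_supp, hω, hBhat_eq, hndhat, hBhatH, hMunit, hBinvB, rfl, hMdom⟩

end Main

/-- Effect-domination ambiguity is unavoidable for linear models (Theorem 8.1). -/
theorem linear_ambiguity
    {d n K : ℕ} (hK : 1 ≤ K) (hn : d ≤ n)
    (E : Fin d → Fin d → Prop) (hG : IsDAG E)
    (H : Matrix (Fin d) (Fin n) ℝ) (hH : H.rank = d)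
    (A : Fin K → Matrix (Fin d) (Fin d) ℝ)
    (hA : ∀ k i j, A k i j ≠ 0 ↔ j ∈ pa E i)
    (ω : Fin K → Fin d → ℝ) (hω : ∀ k i, 0 < ω k i)
    (B : Fin K → Matrix (Fin d) (Fin d) ℝ)
    (hB : ∀ k, B k = Matrix.diagonal (fun i => (Real.sqrt (ω k i))⁻¹) * (1 - A k))
    (hnd : NodeNonDegenerate E B) :
    (∃ Hhat Ahat ωhat Bhat M, AmbiguousSolution E H B Hhat Ahat ωhat Bhat M) ∧
    (∀ part : Fin K → Fin d,
      (∀ k l, k ≠ l → part k = part l → ∀ j, (B k j = B l j ↔ j ≠ part k)) →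
      ∃ Hhat Ahat ωhat Bhat M,
        AmbiguousSolution E H B Hhat Ahat ωhat Bhat M ∧
        ∀ k l, k ≠ l → part k = part l → ∀ j, (Bhat k j = Bhat l j ↔ j ≠ part k)) := by
  obtain ⟨M, Q, Bhat, Ahat, hMQ, hQM, hBhatQ, hsol⟩ :=
    construction E hG H hH A hA ω hω B hB hnd
  have hamb : AmbiguousSolution E H B (M * H) Ahat ω Bhat M := hsol
  have hrowiff : ∀ k l (j : Fin d), Bhat k j = Bhat l j ↔ B k j = B l j := by
    intro k l j
    constructor
    · intro h
      rw [hBhatQ k, hBhatQ l, row_mul, row_mul] at h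
      have h2 := congrArg (fun v => v ᵥ* M) h
      simpa [Matrix.vecMul_vecMul, hQM, Matrix.vecMul_one] using h2
    · intro h
      rw [hBhatQ k, hBhatQ l, row_mul, row_mul, h]
  refine ⟨⟨M * H, Ahat, ω, Bhat, M, hamb⟩, ?_⟩
  intro part hpart
  refine ⟨M * H, Ahat, ω, Bhat, M, hamb, ?_⟩
  intro k l hkl hpk j
  rw [hrowiff k l j]
  exact hpart k l hkl hpk j
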